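/- Let Γ be a finite simple graph with adjacency matrix ε (over the natural numbers), and let i be a vertex. If the connected component of i has exactly one vertex (i is isolated), then (ε⁴)_{ii} = 0. If the connected component of i has exactly two vertices, then (ε⁴)_{ii} = 1. If the connected component of i has at least three vertices, then (ε⁴)_{ii} ≥ 2. In particular, if the connected component of i has exactly two vertices and the connected component of j does not have exactly two vertices, then (ε⁴)_{ii} ≠ (ε⁴)_{jj}. -/

import Mathlib

open Matrix Finset

private lemma exists_adj_of_reachable {V : Type*} {Γ : SimpleGraph V} {i v : V}
    (h : Γ.Reachable i v) (hne : i ≠ v) : ∃ w, Γ.Adj i w := by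
  obtain ⟨p⟩ := h
  cases p with
  | nil => exact absurd rfl hne
  | cons h _ => exact ⟨_, h⟩

private lemma supp_subset_pair {V : Type*} {Γ : SimpleGraph V} {i b : V}
    (hNi : ∀ w, Γ.Adj i w → w = b) (hNb : ∀ w, Γ.Adj b w → w = i) :
    (Γ.connectedComponentMk i).supp ⊆ {i, b} := by
  have key : ∀ {u v : V} (_ : Γ.Walk u v), u ∈ ({i, b} : Set V) → v ∈ ({i, b} : Set V) := by
    intro u v p
    induction p with
    | nil => exact id
    | @cons u x _ h _ ih =>
      intro hu
      apply ih
      rcases hu with hu | hu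
      · subst hu; right; exact hNi x h
      · subst hu; left; exact hNb x h
  intro v hv
  rw [SimpleGraph.ConnectedComponent.mem_supp_iff, SimpleGraph.ConnectedComponent.eq] at hv
  obtain ⟨p⟩ := hv
  exact key p.reverse (Or.inl rfl)

section main
variable {V : Type*} [Fintype V] [DecidableEq V] (Γ : SimpleGraph V) [DecidableRel Γ.Adj]

private lemma pow4_eq (i : V) :
    (Γ.adjMatrix ℕ ^ 4) i i =
      ∑ k, (Γ.adjMatrix ℕ ^ 2) i k * (Γ.adjMatrix ℕ ^ 2) k i := by
  have h : Γ.adjMatrix ℕ ^ 4 = Γ.adjMatrix ℕ ^ 2 * Γ.adjMatrix ℕ ^ 2 := by rw [← pow_add]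
  rw [h, Matrix.mul_apply]

private lemma sq_eq (a c : V) :
    (Γ.adjMatrix ℕ ^ 2) a c = ∑ m, Γ.adjMatrix ℕ a m * Γ.adjMatrix ℕ m c := by
  rw [pow_two, Matrix.mul_apply]

private lemma isolated_case {i : V} (h : ∀ w, ¬ Γ.Adj i w) :
    (Γ.adjMatrix ℕ ^ 4) i i = 0 := by
  rw [pow4_eq]
  apply Finset.sum_eq_zero
  intro k _
  rw [sq_eq]
  simp [h]

private lemma two_case {i b : V} (hib : Γ.Adj i b) (hNi : ∀ w, Γ.Adj i w → w = b)
    (hNb : ∀ w, Γ.Adj b w → w = i) : (Γ.adjMatrix ℕ ^ 4) i i = 1 := by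
  have hA : ∀ m k, Γ.adjMatrix ℕ i m * Γ.adjMatrix ℕ m k
      = if m = b then Γ.adjMatrix ℕ b k else 0 := by
    intro m k
    by_cases hm : m = b
    · subst hm; simp [hib]
    · have : ¬ Γ.Adj i m := fun h => hm (hNi m h)
      simp [this, hm]
  have hA' : ∀ m k, Γ.adjMatrix ℕ k m * Γ.adjMatrix ℕ m i
      = if m = b then Γ.adjMatrix ℕ k b else 0 := by
    intro m k
    by_cases hm : m = b
    · subst hm; simp [hib.symm]
    · have : ¬ Γ.Adj m i := fun h => hm (hNi m h.symm)
      simp [this, hm]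
  have h2 : ∀ k, (Γ.adjMatrix ℕ ^ 2) i k = Γ.adjMatrix ℕ b k := by
    intro k; rw [sq_eq]
    simp only [hA, Finset.sum_ite_eq', Finset.mem_univ, if_true]
  have h2' : ∀ k, (Γ.adjMatrix ℕ ^ 2) k i = Γ.adjMatrix ℕ k b := by
    intro k; rw [sq_eq]
    simp only [hA', Finset.sum_ite_eq', Finset.mem_univ, if_true]
  have hbk : ∀ k, Γ.adjMatrix ℕ b k * Γ.adjMatrix ℕ k b = if k = i then 1 else 0 := by
    intro k
    by_cases hk : k = i
    · subst hk; simp [hib, hib.symm]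
    · have : ¬ Γ.Adj b k := fun h => hk (hNb k h)
      simp [this, hk]
  rw [pow4_eq]
  simp only [h2, h2', hbk]
  simp

private lemma one_le_sq {a c : V} (m : V) (h1 : Γ.Adj a m) (h2 : Γ.Adj m c) :
    1 ≤ (Γ.adjMatrix ℕ ^ 2) a c := by
  rw [sq_eq]
  calc (1 : ℕ) = Γ.adjMatrix ℕ a m * Γ.adjMatrix ℕ m c := by simp [h1, h2]
  _ ≤ _ := Finset.single_le_sum
      (f := fun m => Γ.adjMatrix ℕ a m * Γ.adjMatrix ℕ m c)
      (fun _ _ => Nat.zero_le _) (mem_univ m)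

private lemma ge_two_of_pair {i a c : V} (hac : a ≠ c)
    (h1 : 1 ≤ (Γ.adjMatrix ℕ ^ 2) i a * (Γ.adjMatrix ℕ ^ 2) a i)
    (h2 : 1 ≤ (Γ.adjMatrix ℕ ^ 2) i c * (Γ.adjMatrix ℕ ^ 2) c i) :
    2 ≤ (Γ.adjMatrix ℕ ^ 4) i i := by
  rw [pow4_eq]
  have hsub : ({a, c} : Finset V) ⊆ univ := subset_univ _
  refine le_trans ?_ (Finset.sum_le_sum_of_subset hsub)
  rw [Finset.sum_pair hac]
  omega

private lemma deg_two_case {i : V} {n1 n2 : V} (h1 : Γ.Adj i n1) (h2 : Γ.Adj i n2)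
    (hne : n1 ≠ n2) : 2 ≤ (Γ.adjMatrix ℕ ^ 4) i i := by
  have hdeg : 2 ≤ (Γ.adjMatrix ℕ ^ 2) i i := by
    rw [sq_eq]
    have hsub : ({n1, n2} : Finset V) ⊆ univ := subset_univ _
    refine le_trans ?_ (Finset.sum_le_sum_of_subset hsub)
    rw [Finset.sum_pair hne]
    simp [h1, h2, h1.symm, h2.symm]
  rw [pow4_eq]
  have hterm : 2 ≤ (Γ.adjMatrix ℕ ^ 2) i i * (Γ.adjMatrix ℕ ^ 2) i i :=
    le_trans hdeg (Nat.le_mul_of_pos_right _ (by omega))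
  exact le_trans hterm (Finset.single_le_sum
    (f := fun k => (Γ.adjMatrix ℕ ^ 2) i k * (Γ.adjMatrix ℕ ^ 2) k i)
    (fun _ _ => Nat.zero_le _) (mem_univ i))

end main

/-- Let `Γ` be a finite simple graph with adjacency matrix `ε` over `ℕ` and let `i` be
a vertex. If the connected component of `i` has exactly one vertex then `(ε⁴)_{ii} = 0`;
if it has exactly two vertices then `(ε⁴)_{ii} = 1`; if it has at least three vertices
then `(ε⁴)_{ii} ≥ 2`. In particular, if the component of `i` has exactly two vertices
and the component of `j` does not, then `(ε⁴)_{ii} ≠ (ε⁴)_{jj}`. -/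
theorem adjMatrix_pow_four_diag {V : Type*} [Fintype V] [DecidableEq V]
    (Γ : SimpleGraph V) [DecidableRel Γ.Adj] (i j : V) :
    (Nat.card ((Γ.connectedComponentMk i).supp) = 1 → (Γ.adjMatrix ℕ ^ 4) i i = 0) ∧
    (Nat.card ((Γ.connectedComponentMk i).supp) = 2 → (Γ.adjMatrix ℕ ^ 4) i i = 1) ∧
    (3 ≤ Nat.card ((Γ.connectedComponentMk i).supp) → 2 ≤ (Γ.adjMatrix ℕ ^ 4) i i) ∧
    (Nat.card ((Γ.connectedComponentMk i).supp) = 2 →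
      Nat.card ((Γ.connectedComponentMk j).supp) ≠ 2 →
      (Γ.adjMatrix ℕ ^ 4) i i ≠ (Γ.adjMatrix ℕ ^ 4) j j) := by
  classical
  -- generic facts, for an arbitrary vertex
  have memself : ∀ v : V, v ∈ (Γ.connectedComponentMk v).supp := fun v =>
    (SimpleGraph.ConnectedComponent.mem_supp_iff _ _).mpr rfl
  have memsupp : ∀ v w : V, Γ.Reachable v w → w ∈ (Γ.connectedComponentMk v).supp := by
    intro v w h
    rw [SimpleGraph.ConnectedComponent.mem_supp_iff, SimpleGraph.ConnectedComponent.eq]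
    exact h.symm
  have card1 : ∀ v : V, Nat.card ((Γ.connectedComponentMk v).supp) = 1 →
      (Γ.adjMatrix ℕ ^ 4) v v = 0 := by
    intro v hc
    rw [Nat.card_coe_set_eq, Set.ncard_eq_one] at hc
    obtain ⟨a, ha⟩ := hc
    have hva : v = a := by have := memself v; rw [ha] at this; exact this
    subst hva
    apply isolated_case
    intro w hw
    have : w ∈ (Γ.connectedComponentMk v).supp := memsupp v w hw.reachable
    rw [ha] at this
    exact Γ.irrefl (this ▸ hw)
  have card2 : ∀ v : V, Nat.card ((Γ.connectedComponentMk v).supp) = 2 →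
      (Γ.adjMatrix ℕ ^ 4) v v = 1 := by
    intro v hc
    rw [Nat.card_coe_set_eq, Set.ncard_eq_two] at hc
    obtain ⟨a, b, hab, hs⟩ := hc
    -- normalize so that the pair is {v, b'}
    obtain ⟨b', hvb', hs'⟩ : ∃ b', v ≠ b' ∧
        (Γ.connectedComponentMk v).supp = {v, b'} := by
      have hv := memself v
      rw [hs] at hv
      rcases hv with hv | hv
      · exact ⟨b, hv ▸ hab, by rw [hs, hv]⟩
      · exact ⟨a, hv ▸ hab.symm, by rw [hs, hv, Set.pair_comm]⟩
    have hNi : ∀ w, Γ.Adj v w → w = b' := by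
      intro w hw
      have : w ∈ (Γ.connectedComponentMk v).supp := memsupp v w hw.reachable
      rw [hs'] at this
      rcases this with h | h
      · exact absurd (h ▸ hw) (Γ.irrefl)
      · exact h
    have hb'supp : b' ∈ (Γ.connectedComponentMk v).supp := by
      rw [hs']; right; rfl
    have hreach : Γ.Reachable v b' := by
      rw [SimpleGraph.ConnectedComponent.mem_supp_iff, SimpleGraph.ConnectedComponent.eq] at hb'supp
      exact hb'supp.symm
    obtain ⟨w, hw⟩ := exists_adj_of_reachable hreach hvb'
    have hib : Γ.Adj v b' := (hNi w hw) ▸ hw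
    have hNb : ∀ w, Γ.Adj b' w → w = v := by
      intro w hw
      have hwsupp : w ∈ (Γ.connectedComponentMk v).supp := by
        rw [SimpleGraph.ConnectedComponent.mem_supp_iff, SimpleGraph.ConnectedComponent.eq]
        exact (hw.reachable.symm).trans hreach.symm
      rw [hs'] at hwsupp
      rcases hwsupp with h | h
      · exact h
      · exact absurd (h ▸ hw) (Γ.irrefl)
    exact two_case Γ hib hNi hNb
  have card3 : ∀ v : V, 3 ≤ Nat.card ((Γ.connectedComponentMk v).supp) →
      2 ≤ (Γ.adjMatrix ℕ ^ 4) v v := by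
    intro v hc
    rw [Nat.card_coe_set_eq] at hc
    -- v has a neighbor
    obtain ⟨u, hu, huv⟩ : ∃ u ∈ (Γ.connectedComponentMk v).supp, u ≠ v := by
      by_contra h
      push_neg at h
      have hsub : (Γ.connectedComponentMk v).supp ⊆ {v} := fun x hx => h x hx
      have := Set.ncard_le_ncard hsub (Set.finite_singleton v)
      rw [Set.ncard_singleton] at this
      omega
    have hreach : Γ.Reachable v u := by
      rw [SimpleGraph.ConnectedComponent.mem_supp_iff, SimpleGraph.ConnectedComponent.eq] at hu
      exact hu.symm
    obtain ⟨b, hb⟩ := exists_adj_of_reachable hreach (Ne.symm huv)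
    by_cases h2 : ∃ w, Γ.Adj v w ∧ w ≠ b
    · obtain ⟨w, hw1, hw2⟩ := h2
      exact deg_two_case Γ hw1 hb hw2
    · push_neg at h2
      have hNi : ∀ w, Γ.Adj v w → w = b := h2
      obtain ⟨c, hbc, hci⟩ : ∃ c, Γ.Adj b c ∧ c ≠ v := by
        by_contra h
        push_neg at h
        have hNb : ∀ w, Γ.Adj b w → w = v := fun w hw => h w hw
        have hsub := supp_subset_pair hNi hNb
        have := Set.ncard_le_ncard hsub (Set.toFinite _)
        have hle : ({v, b} : Set V).ncard ≤ 2 := by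
          calc ({v, b} : Set V).ncard ≤ ({b} : Set V).ncard + 1 :=
            Set.ncard_insert_le v {b}
          _ = 2 := by rw [Set.ncard_singleton]
        omega
      apply ge_two_of_pair Γ (a := v) (c := c) (Ne.symm hci)
      · have h1 : 1 ≤ (Γ.adjMatrix ℕ ^ 2) v v := one_le_sq Γ b hb hb.symm
        exact Nat.one_le_iff_ne_zero.mpr (by positivity)
      · have h1 : 1 ≤ (Γ.adjMatrix ℕ ^ 2) v c := one_le_sq Γ b hb hbc
        have h2 : 1 ≤ (Γ.adjMatrix ℕ ^ 2) c v := one_le_sq Γ b hbc.symm hb.symm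
        exact Nat.one_le_iff_ne_zero.mpr (by positivity)
  refine ⟨card1 i, card2 i, card3 i, ?_⟩
  intro hi2 hj2
  rw [card2 i hi2]
  have hjpos : 1 ≤ Nat.card ((Γ.connectedComponentMk j).supp) := by
    have : Nonempty ((Γ.connectedComponentMk j).supp) := ⟨⟨j, memself j⟩⟩
    exact Nat.card_pos
  rcases Nat.lt_or_ge (Nat.card ((Γ.connectedComponentMk j).supp)) 3 with h | h
  · have : Nat.card ((Γ.connectedComponentMk j).supp) = 1 := by omega
    rw [card1 j this]
    omega
  · have := card3 j h
    omega
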